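/- Let f be a Schwartz function on (0,∞) admitting an asymptotic expansion f(ε) ~ Σ_{j≥0} b_j ε^{β+j} as ε → 0 for some β ∈ ℂ. Then the Mellin transform M(f)(z) := (1/Γ(z)) ∫_0^∞ ε^{z-1} f(ε) dε, initially defined for Re(z) + Re(β) > 0, extends to a meromorphic function on ℂ that is holomorphic at z = 0, and its value at 0 equals the Hadamard finite part of f at 0 (namely b_{-β} if β is a nonpositive integer, and 0 otherwise). -/

import Mathlib

open Filter Asymptotics MeasureTheory Set Complex Topology

noncomputable def sAux (β : ℂ) (b : ℕ → ℂ) (N : ℕ) : ℝ → ℂ :=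
  fun ε => ∑ j ∈ Finset.range N, b j * (ε : ℂ) ^ (β + (j : ℂ))

noncomputable def gAux (f : ℝ → ℂ) (β : ℂ) (b : ℕ → ℂ) (N : ℕ) : ℝ → ℂ :=
  fun ε => f ε - (Set.Ioc (0:ℝ) 1).indicator (sAux β b N) ε

noncomputable def HAux (f : ℝ → ℂ) (β : ℂ) (b : ℕ → ℂ) (N : ℕ) : ℂ → ℂ :=
  fun z => (Complex.Gamma (z+1))⁻¹ *
    (z * mellin (gAux f β b N) z +
      ∑ j ∈ Finset.range N, b j * (1 - (β + (j:ℂ))/(z + β + (j:ℂ))))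

noncomputable def MAux (f : ℝ → ℂ) (β : ℂ) (b : ℕ → ℂ) : ℂ → ℂ :=
  fun z => HAux f β b (⌈-(z.re + β.re)⌉₊ + 1) z

lemma sAux_contOn (β : ℂ) (b : ℕ → ℂ) (N : ℕ) : ContinuousOn (sAux β b N) (Set.Ioi 0) := by
  apply continuousOn_finset_sum
  intro j _
  apply ContinuousOn.mul continuousOn_const
  exact fun x hx => (Complex.continuousAt_ofReal_cpow_const _ _
    (Or.inr (ne_of_gt hx))).continuousWithinAt

lemma gAux_locInt {f : ℝ → ℂ} (hcont : ContinuousOn f (Set.Ioi 0)) (β : ℂ) (b : ℕ → ℂ) (N : ℕ) :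
    LocallyIntegrableOn (gAux f β b N) (Set.Ioi 0) := by
  rw [locallyIntegrableOn_iff isOpen_Ioi.isLocallyClosed]
  intro k hk hkc
  apply Integrable.sub
  · exact (hcont.mono hk).integrableOn_compact hkc
  · exact (((sAux_contOn β b N).mono hk).integrableOn_compact hkc).indicator measurableSet_Ioc

lemma gAux_top {f : ℝ → ℂ}
    (hdecay : ∀ n : ℕ, f =O[atTop] fun ε : ℝ => ε ^ (-(n : ℝ)))
    (β : ℂ) (b : ℕ → ℂ) (N n : ℕ) :
    gAux f β b N =O[atTop] fun ε : ℝ => ε ^ (-(n : ℝ)) := by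
  refine (hdecay n).congr' ?_ EventuallyEq.rfl
  filter_upwards [eventually_gt_atTop (1:ℝ)] with ε hε
  have : ε ∉ Set.Ioc (0:ℝ) 1 := fun h => absurd h.2 (not_le.mpr hε)
  simp [gAux, Set.indicator_of_notMem this]

lemma gAux_bot {f : ℝ → ℂ} {β : ℂ} {b : ℕ → ℂ}
    (hasymp : ∀ N : ℕ,
      (fun ε : ℝ => f ε - ∑ j ∈ Finset.range N, b j * (ε : ℂ) ^ (β + (j : ℂ)))
        =O[nhdsWithin 0 (Set.Ioi 0)] fun ε : ℝ => ε ^ (β.re + (N : ℝ))) (N : ℕ) :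
    gAux f β b N =O[𝓝[>] (0:ℝ)] fun ε : ℝ => ε ^ (β.re + (N : ℝ)) := by
  refine (hasymp N).congr' ?_ EventuallyEq.rfl
  filter_upwards [Ioc_mem_nhdsGT (zero_lt_one (α := ℝ))] with ε hε
  simp [gAux, sAux, Set.indicator_of_mem hε]

def HCont (f : ℝ → ℂ) : Prop := ContinuousOn f (Set.Ioi 0)
def HDecay (f : ℝ → ℂ) : Prop := ∀ n : ℕ, f =O[atTop] fun ε : ℝ => ε ^ (-(n : ℝ))
def HAsymp (f : ℝ → ℂ) (β : ℂ) (b : ℕ → ℂ) : Prop := ∀ N : ℕ,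
      (fun ε : ℝ => f ε - ∑ j ∈ Finset.range N, b j * (ε : ℂ) ^ (β + (j : ℂ)))
        =O[nhdsWithin 0 (Set.Ioi 0)] fun ε : ℝ => ε ^ (β.re + (N : ℝ))

lemma gAux_bot' (hasymp : HAsymp f β b) (N : ℕ) :
    gAux f β b N =O[𝓝[>] (0:ℝ)] fun ε : ℝ => ε ^ (-(-(β.re + (N : ℝ)))) := by
  rw [neg_neg]; exact gAux_bot hasymp N

lemma mellin_conv (hcont : HCont f) (hdecay : HDecay f) (hasymp : HAsymp f β b) {z : ℂ} {N : ℕ} (hz : -(β.re + (N:ℝ)) < z.re) :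
    MellinConvergent (gAux f β b N) z := by
  refine mellinConvergent_of_isBigO_rpow (gAux_locInt hcont β b N)
    (gAux_top hdecay β b N (⌈z.re⌉₊ + 1)) ?_ (gAux_bot' hasymp N) hz
  push_cast
  exact lt_of_le_of_lt (Nat.le_ceil _) (lt_add_one _)

lemma mellin_diff (hcont : HCont f) (hdecay : HDecay f) (hasymp : HAsymp f β b) {z : ℂ} {N : ℕ} (hz : -(β.re + (N:ℝ)) < z.re) :
    DifferentiableAt ℂ (mellin (gAux f β b N)) z := by
  refine mellin_differentiableAt_of_isBigO_rpow (gAux_locInt hcont β b N)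
    (gAux_top hdecay β b N (⌈z.re⌉₊ + 1)) ?_ (gAux_bot' hasymp N) hz
  push_cast
  exact lt_of_le_of_lt (Nat.le_ceil _) (lt_add_one _)

lemma mellin_step (hcont : HCont f) (hdecay : HDecay f) (hasymp : HAsymp f β b) {z : ℂ} {N : ℕ} (hz : 0 < z.re + β.re + N) :
    mellin (gAux f β b (N+1)) z = mellin (gAux f β b N) z - b N / (z + β + N) := by
  have hzN : -(β.re + (N:ℝ)) < z.re := by linarith
  have hzN1 : -(β.re + ((N+1:ℕ):ℝ)) < z.re := by push_cast; linarith
  have h1 := mellin_conv hcont hdecay hasymp hzN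
  have h2 := mellin_conv hcont hdecay hasymp hzN1
  have key : mellin (gAux f β b N) z - mellin (gAux f β b (N+1)) z = b N / (z + β + N) := by
    unfold mellin
    rw [← integral_sub h1 h2]
    have congr1 : ∀ t ∈ Set.Ioi (0:ℝ),
        (t:ℂ) ^ (z-1) • gAux f β b N t - (t:ℂ) ^ (z-1) • gAux f β b (N+1) t
        = (Set.Ioc (0:ℝ) 1).indicator (fun ε : ℝ => (ε:ℂ) ^ (z + β + N - 1) * b N) t := by
      intro t ht
      rw [← smul_sub]
      have : gAux f β b N t - gAux f β b (N+1) t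
          = (Set.Ioc (0:ℝ) 1).indicator (fun ε : ℝ => b N * (ε:ℂ) ^ (β + (N:ℂ))) t := by
        unfold gAux sAux
        by_cases h : t ∈ Set.Ioc (0:ℝ) 1
        · simp only [Set.indicator_of_mem h, Finset.sum_range_succ]; ring
        · simp [Set.indicator_of_notMem h]
      rw [this]
      by_cases h : t ∈ Set.Ioc (0:ℝ) 1
      · rw [Set.indicator_of_mem h, Set.indicator_of_mem h, smul_eq_mul]
        have ht0 : (t:ℂ) ≠ 0 := Complex.ofReal_ne_zero.mpr (ne_of_gt ht)
        have hsplit : (t:ℂ) ^ (z + β + (N:ℂ) - 1) = (t:ℂ) ^ (z-1) * (t:ℂ) ^ (β + (N:ℂ)) := by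
          rw [← Complex.cpow_add _ _ ht0]; congr 1; ring
        rw [hsplit]; ring
      · simp [Set.indicator_of_notMem h]
    rw [setIntegral_congr_fun measurableSet_Ioi congr1,
      setIntegral_indicator measurableSet_Ioc,
      Set.inter_eq_self_of_subset_right Set.Ioc_subset_Ioi_self,
      ← intervalIntegral.integral_of_le (zero_le_one),
      intervalIntegral.integral_mul_const, integral_cpow]
    · have hne : z + β + (N:ℂ) ≠ 0 := by
        intro h
        have : (z + β + (N:ℂ)).re = 0 := by rw [h]; simp
        simp only [Complex.add_re, Complex.natCast_re] at this
        linarith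
      rw [sub_add_cancel, Complex.ofReal_one, Complex.one_cpow, Complex.ofReal_zero,
        Complex.zero_cpow hne]
      field_simp
      simp
    · left
      simp only [Complex.sub_re, Complex.add_re, Complex.one_re, Complex.natCast_re]
      linarith
  linear_combination -key


lemma re_add_ne {z : ℂ} {N : ℕ} (hz : 0 < z.re + β.re + N) : z + β + (N:ℂ) ≠ 0 := by
  intro h
  have : (z + β + (N:ℂ)).re = 0 := by rw [h]; simp
  simp only [Complex.add_re, Complex.natCast_re] at this
  linarith

lemma HAux_step (hcont : HCont f) (hdecay : HDecay f) (hasymp : HAsymp f β b) {z : ℂ} {N : ℕ}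
    (hz : 0 < z.re + β.re + N) : HAux f β b N z = HAux f β b (N+1) z := by
  have hne : z + β + (N:ℂ) ≠ 0 := re_add_ne hz
  unfold HAux
  rw [mellin_step hcont hdecay hasymp hz, Finset.sum_range_succ]
  congr 1
  field_simp
  ring

lemma HAux_consist (hcont : HCont f) (hdecay : HDecay f) (hasymp : HAsymp f β b) {z : ℂ}
    {N₁ N₂ : ℕ} (hle : N₁ ≤ N₂) (hz : 0 < z.re + β.re + N₁) :
    HAux f β b N₁ z = HAux f β b N₂ z := by
  induction N₂, hle using Nat.le_induction with
  | base => rfl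
  | succ N hN ih =>
    rw [ih, HAux_step hcont hdecay hasymp]
    have : (N₁:ℝ) ≤ N := Nat.cast_le.mpr hN
    linarith

lemma MAux_adm (β : ℂ) (z : ℂ) :
    0 < z.re + β.re + ((⌈-(z.re + β.re)⌉₊ + 1 : ℕ):ℝ) := by
  have := Nat.le_ceil (-(z.re + β.re))
  push_cast
  linarith

lemma MAux_eq_HAux (hcont : HCont f) (hdecay : HDecay f) (hasymp : HAsymp f β b) {z : ℂ} {N : ℕ}
    (hz : 0 < z.re + β.re + N) : MAux f β b z = HAux f β b N z := by
  unfold MAux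
  rw [HAux_consist hcont hdecay hasymp (le_max_left (⌈-(z.re + β.re)⌉₊ + 1) N) (MAux_adm β z)]
  exact (HAux_consist hcont hdecay hasymp (le_max_right (⌈-(z.re + β.re)⌉₊ + 1) N) hz).symm

lemma MAux_eventuallyEq (hcont : HCont f) (hdecay : HDecay f) (hasymp : HAsymp f β b) {z₀ : ℂ}
    {N : ℕ} (h : 1 < z₀.re + β.re + N) : MAux f β b =ᶠ[𝓝 z₀] HAux f β b N := by
  filter_upwards [Metric.ball_mem_nhds z₀ one_pos] with w hw
  rw [Metric.mem_ball] at hw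
  rw [Complex.dist_eq] at hw
  have hre : |(w - z₀).re| < 1 := lt_of_le_of_lt (Complex.abs_re_le_norm _) hw
  rw [Complex.sub_re, abs_lt] at hre
  exact MAux_eq_HAux hcont hdecay hasymp (by linarith [hre.1])

lemma HAux_mero (hcont : HCont f) (hdecay : HDecay f) (hasymp : HAsymp f β b) {z : ℂ} {N : ℕ}
    (hz : 0 < z.re + β.re + N) : MeromorphicAt (HAux f β b N) z := by
  have hΓ : AnalyticAt ℂ (fun w : ℂ => (Complex.Gamma (w+1))⁻¹) z :=
    (Complex.differentiable_one_div_Gamma.comp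
      (differentiable_id.add (differentiable_const 1))).analyticAt z
  have hmell : AnalyticAt ℂ (mellin (gAux f β b N)) z := by
    have hopen : IsOpen {w : ℂ | -(β.re + (N:ℝ)) < w.re} :=
      isOpen_lt continuous_const Complex.continuous_re
    exact DifferentiableOn.analyticAt
      (fun w hw => (mellin_diff hcont hdecay hasymp hw).differentiableWithinAt)
      (hopen.mem_nhds (by simp only [Set.mem_setOf_eq]; linarith))
  have hterm : ∀ j : ℕ, MeromorphicAt (fun w : ℂ => b j * (1 - (β+(j:ℂ))/(w+β+(j:ℂ)))) z :=
    fun j => (MeromorphicAt.const _ z).mul ((MeromorphicAt.const _ z).sub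
      ((MeromorphicAt.const _ z).div
        (((analyticAt_id.add analyticAt_const).add analyticAt_const).meromorphicAt)))
  have hsum : ∀ (s : Finset ℕ),
      MeromorphicAt (fun w : ℂ => ∑ j ∈ s, b j * (1 - (β+(j:ℂ))/(w+β+(j:ℂ)))) z := by
    intro s
    induction s using Finset.induction_on with
    | empty => simpa using MeromorphicAt.const (0:ℂ) z
    | @insert a s ha ih =>
      have := (hterm a).add ih
      simp only [Finset.sum_insert ha]; exact this
  exact hΓ.meromorphicAt.mul ((analyticAt_id.mul hmell).meromorphicAt.add (hsum _))

lemma HAux_analytic0 (hcont : HCont f) (hdecay : HDecay f) (hasymp : HAsymp f β b) {N : ℕ}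
    (hz : 0 < β.re + N) : AnalyticAt ℂ (HAux f β b N) 0 := by
  have hΓ : AnalyticAt ℂ (fun w : ℂ => (Complex.Gamma (w+1))⁻¹) 0 :=
    (Complex.differentiable_one_div_Gamma.comp
      (differentiable_id.add (differentiable_const 1))).analyticAt 0
  have hmell : AnalyticAt ℂ (mellin (gAux f β b N)) 0 := by
    have hopen : IsOpen {w : ℂ | -(β.re + (N:ℝ)) < w.re} :=
      isOpen_lt continuous_const Complex.continuous_re
    exact DifferentiableOn.analyticAt
      (fun w hw => (mellin_diff hcont hdecay hasymp hw).differentiableWithinAt)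
      (hopen.mem_nhds (by simp only [Set.mem_setOf_eq, Complex.zero_re]; linarith))
  have hterm : ∀ j : ℕ, AnalyticAt ℂ (fun w : ℂ => b j * (1 - (β+(j:ℂ))/(w+β+(j:ℂ)))) 0 := by
    intro j
    by_cases hβj : β + (j:ℂ) = 0
    · have : (fun w : ℂ => b j * (1 - (β+(j:ℂ))/(w+β+(j:ℂ)))) = fun _ => b j := by
        funext w; rw [hβj, zero_div, sub_zero, mul_one]
      rw [this]; exact analyticAt_const
    · refine analyticAt_const.mul (analyticAt_const.sub (analyticAt_const.div
        ((analyticAt_id.add analyticAt_const).add analyticAt_const) ?_))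
      simpa [add_assoc] using hβj
  exact hΓ.mul ((analyticAt_id.mul hmell).add
    ((Finset.range N).analyticAt_fun_sum (fun j _ => hterm j)))


/-- Let `f` be a Schwartz-type function on `(0,∞)` (continuous, with rapid decay at `∞`)
admitting an asymptotic expansion `f(ε) ~ ∑_{j≥0} b_j ε^{β+j}` as `ε → 0⁺`. Then the
Mellin transform `M(f)(z) = (1/Γ(z)) ∫_0^∞ ε^{z-1} f(ε) dε`, initially defined for
`Re z + Re β > 0`, extends to a meromorphic function on `ℂ` that is holomorphic at
`z = 0`, whose value at `0` is the Hadamard finite part of `f` at `0`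
(`b_m` if `β = -m` for a nonnegative integer `m`, and `0` otherwise). -/
theorem stmt_11 (f : ℝ → ℂ) (β : ℂ) (b : ℕ → ℂ)
    (hcont : ContinuousOn f (Set.Ioi 0))
    (hdecay : ∀ n : ℕ, f =O[atTop] fun ε : ℝ => ε ^ (-(n : ℝ)))
    (hasymp : ∀ N : ℕ,
      (fun ε : ℝ => f ε - ∑ j ∈ Finset.range N, b j * (ε : ℂ) ^ (β + (j : ℂ)))
        =O[nhdsWithin 0 (Set.Ioi 0)] fun ε : ℝ => ε ^ (β.re + (N : ℝ))) :
    ∃ M : ℂ → ℂ, (∀ z : ℂ, MeromorphicAt M z) ∧ AnalyticAt ℂ M 0 ∧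
      (∀ z : ℂ, 0 < z.re + β.re →
        M z = (1 / Complex.Gamma z) *
          ∫ ε in Set.Ioi (0 : ℝ), (ε : ℂ) ^ (z - 1) * f ε) ∧
      (∀ m : ℕ, β = -(m : ℂ) → M 0 = b m) ∧
      ((∀ m : ℕ, β ≠ -(m : ℂ)) → M 0 = 0) := by
  have hc : HCont f := hcont
  have hd : HDecay f := hdecay
  have ha : HAsymp f β b := hasymp
  have hadm0 : 0 < (0:ℂ).re + β.re + ((⌈|β.re|⌉₊ + 2 : ℕ) : ℝ) := by
    have h2 := Nat.le_ceil (|β.re|)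
    have h3 := neg_abs_le β.re
    push_cast
    simp only [Complex.zero_re]
    linarith
  have hadm1 : 1 < (0:ℂ).re + β.re + ((⌈|β.re|⌉₊ + 2 : ℕ) : ℝ) := by
    have h2 := Nat.le_ceil (|β.re|)
    have h3 := neg_abs_le β.re
    push_cast
    simp only [Complex.zero_re]
    linarith
  refine ⟨MAux f β b, ?_, ?_, ?_, ?_, ?_⟩
  · intro z
    have hadm : 1 < z.re + β.re + ((⌈-(z.re + β.re)⌉₊ + 2 : ℕ) : ℝ) := by
      have := Nat.le_ceil (-(z.re + β.re))
      push_cast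
      linarith
    exact (HAux_mero hc hd ha (by linarith)).congr
      ((MAux_eventuallyEq hc hd ha hadm).symm.filter_mono nhdsWithin_le_nhds)
  · refine (HAux_analytic0 hc hd ha (N := ⌈|β.re|⌉₊ + 2) ?_).congr
      (MAux_eventuallyEq hc hd ha hadm1).symm
    simp only [Complex.zero_re] at hadm0
    linarith
  · intro z hz
    rw [MAux_eq_HAux hc hd ha (N := 0) (by push_cast; linarith)]
    have hg0 : gAux f β b 0 = f := by
      funext ε
      simp [gAux, sAux]
    simp only [HAux, hg0, Finset.range_zero, Finset.sum_empty, add_zero]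
    have hmf : mellin f z = ∫ ε in Set.Ioi (0:ℝ), (ε:ℂ) ^ (z-1) * f ε := by
      simp only [mellin, smul_eq_mul]
    rw [hmf]
    by_cases hz0 : z = 0
    · subst hz0
      simp [Complex.Gamma_zero]
    · rw [Complex.Gamma_add_one z hz0, mul_inv_rev, one_div, mul_assoc, ← mul_assoc z⁻¹,
        inv_mul_cancel₀ hz0, one_mul]
  · intro m hm
    have hadm : 0 < (0:ℂ).re + β.re + ((m + 2 : ℕ) : ℝ) := by
      rw [hm]
      push_cast
      simp only [Complex.zero_re, Complex.neg_re, Complex.natCast_re]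
      linarith
    rw [MAux_eq_HAux hc hd ha (N := m+2) hadm]
    simp only [HAux]
    rw [zero_add, Complex.Gamma_one, inv_one, one_mul, zero_mul, zero_add]
    rw [Finset.sum_eq_single_of_mem m (Finset.mem_range.mpr (by omega))]
    · have hβm : β + (m:ℂ) = 0 := by rw [hm]; ring
      rw [hβm, zero_div, sub_zero, mul_one]
    · intro j _ hj
      have hne : β + (j:ℂ) ≠ 0 := by
        rw [hm]
        intro h
        apply hj
        have : (j:ℂ) = (m:ℂ) := by linear_combination h
        exact_mod_cast this
      rw [zero_add, div_self hne, sub_self, mul_zero]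
  · intro hne
    rw [MAux_eq_HAux hc hd ha (N := ⌈|β.re|⌉₊ + 2) hadm0]
    simp only [HAux]
    rw [zero_add, Complex.Gamma_one, inv_one, one_mul, zero_mul, zero_add]
    apply Finset.sum_eq_zero
    intro j _
    have hj : β + (j:ℂ) ≠ 0 := fun h => hne j (eq_neg_of_add_eq_zero_left h)
    rw [zero_add, div_self hj, sub_self, mul_zero]
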